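/- At the unique Nash equilibrium of the load-side Cournot game with L ≥ 1 loads of demands d_l > 0 and constants α^{RT} > α^{DA} > 0, β^{DA} ∈ ℝ, the aggregate participations satisfy Σ_{l=1}^{L} d_l^{DA*} = (1 − α^{DA}/((L+1)·α^{RT}))·Σ_{l=1}^{L} d_l and Σ_{l=1}^{L} d_l^{RT*} = (α^{DA}/((L+1)·α^{RT}))·Σ_{l=1}^{L} d_l. Consequently, writing d := Σ_{l=1}^{L} d_l, one has d > Σ_l d_l^{DA*} > (L/(L+1))·d and (1/(L+1))·d > Σ_l d_l^{RT*} > 0, and the resulting prices satisfy λ^{RT} > λ^{DA}, i.e., the price spread λ^{DA} − λ^{RT} is strictly negative. -/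

import Mathlib

/-- Expenditure of player `l` in the load-side Cournot game: given demands `dem`, a
profile `p` of day-ahead participations (real-time participation of `k` is
`dem k - p k`), prices are `λ^{DA} = α^{DA}·(∑ k, p k) + β^{DA}` and
`λ^{RT} = α^{RT}·(∑ k, dem k - p k) + λ^{DA}`, and the expenditure is
`λ^{DA}·p l + λ^{RT}·(dem l - p l)`. -/
noncomputable def expend {ι : Type*} [Fintype ι] (aDA aRT bDA : ℝ)
    (dem p : ι → ℝ) (l : ι) : ℝ :=
  (aDA * ∑ k, p k + bDA) * p l
    + (aRT * ∑ k, (dem k - p k) + (aDA * ∑ k, p k + bDA)) * (dem l - p l)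

/-- Nash equilibrium of the load-side Cournot game. -/
def IsNash {ι : Type*} [Fintype ι] [DecidableEq ι] (aDA aRT bDA : ℝ)
    (dem p : ι → ℝ) : Prop :=
  (∀ k, 0 ≤ p k) ∧
    ∀ l : ι, ∀ y : ℝ, 0 ≤ y →
      expend aDA aRT bDA dem p l ≤ expend aDA aRT bDA dem (Function.update p l y) l

/-- The change in player `l`'s expenditure when unilaterally deviating to `y`
factors as `(y - p l) * (aRT·y + (aDA - aRT)·dem l - aRT·R)`. -/
lemma expend_diff {ι : Type*} [Fintype ι] [DecidableEq ι] (aDA aRT bDA : ℝ)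
    (dem p : ι → ℝ) (l : ι) (y : ℝ) :
    expend aDA aRT bDA dem (Function.update p l y) l - expend aDA aRT bDA dem p l
      = (y - p l) * (aRT * y + (aDA - aRT) * dem l - aRT * ∑ k, (dem k - p k)) := by
  have h1 : ∑ k, Function.update p l y k = y + ∑ k ∈ Finset.univ \ {l}, p k :=
    Finset.sum_update_of_mem (Finset.mem_univ l) p y
  have h2 : ∑ k, (dem k - Function.update p l y k)
      = (dem l - y) + ∑ k ∈ Finset.univ \ {l}, (dem k - p k) := by
    rw [Finset.sum_eq_add_sum_sdiff_singleton_of_mem (Finset.mem_univ l)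
      (fun k => dem k - Function.update p l y k), Function.update_self]
    congr 1
    exact Finset.sum_congr rfl fun k hk => by
      have : k ≠ l := by simpa using (Finset.mem_sdiff.1 hk).2
      rw [Function.update_of_ne this]
  have h3 : ∑ k, p k = p l + ∑ k ∈ Finset.univ \ {l}, p k :=
    Finset.sum_eq_add_sum_sdiff_singleton_of_mem (Finset.mem_univ l) _
  have h4 : ∑ k, (dem k - p k) = (dem l - p l) + ∑ k ∈ Finset.univ \ {l}, (dem k - p k) :=
    Finset.sum_eq_add_sum_sdiff_singleton_of_mem (Finset.mem_univ l) _
  simp only [expend, h1, h2, h3, h4, Function.update_self]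
  ring

theorem cournot_equilibrium_aggregate_negative_spread
    (L : ℕ) (hL : 1 ≤ L)
    (aDA aRT bDA : ℝ) (h0 : 0 < aDA) (hlt : aDA < aRT)
    (dl : Fin L → ℝ) (hdl : ∀ k, 0 < dl k)
    (d : ℝ) (hd : d = ∑ l, dl l)
    (p : Fin L → ℝ) (hp : IsNash aDA aRT bDA dl p)
    (lamDA lamRT : ℝ)
    (hlamDA : lamDA = aDA * (∑ l, p l) + bDA)
    (hlamRT : lamRT = aRT * (∑ l, (dl l - p l)) + lamDA) :
    (∑ l, p l = (1 - aDA / (((L : ℝ) + 1) * aRT)) * d) ∧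
    (∑ l, (dl l - p l) = aDA / (((L : ℝ) + 1) * aRT) * d) ∧
    d > ∑ l, p l ∧ ∑ l, p l > (L : ℝ) / ((L : ℝ) + 1) * d ∧
    1 / ((L : ℝ) + 1) * d > ∑ l, (dl l - p l) ∧ 0 < ∑ l, (dl l - p l) ∧
    lamRT > lamDA ∧ lamDA - lamRT < 0 := by
  have haRT : 0 < aRT := h0.trans hlt
  have hne : Nonempty (Fin L) := ⟨⟨0, hL⟩⟩
  have hdpos : 0 < d := by
    rw [hd]; exact Finset.sum_pos (fun i _ => hdl i) Finset.univ_nonempty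
  set S := ∑ l, p l with hS
  set R := ∑ l, (dl l - p l) with hR
  have hRS : R = d - S := by
    rw [hR, hS, hd, Finset.sum_sub_distrib]
  obtain ⟨hnn, hmin⟩ := hp
  -- KKT quantity for player l
  set g : Fin L → ℝ := fun l => aRT * p l + (aDA - aRT) * dl l - aRT * R with hgdef
  have hkey : ∀ l (y : ℝ), 0 ≤ y →
      0 ≤ (y - p l) * (aRT * y + (aDA - aRT) * dl l - aRT * R) := by
    intro l y hy
    have := hmin l y hy
    have h := expend_diff aDA aRT bDA dl p l y
    rw [← hR] at h
    linarith [h ▸ sub_nonneg.2 this]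
  have hg0 : ∀ l, 0 ≤ g l := by
    intro l
    by_contra hneg
    push_neg at hneg
    set t : ℝ := -(g l) / (2 * aRT) with ht
    have htpos : 0 < t := by
      apply div_pos (by linarith) (by linarith)
    have hy : (0:ℝ) ≤ p l + t := by linarith [hnn l]
    have := hkey l (p l + t) hy
    have hfac : aRT * (p l + t) + (aDA - aRT) * dl l - aRT * R = g l + aRT * t := by
      simp only [hgdef]; ring
    have hat : aRT * t = -(g l) / 2 := by
      rw [ht]; field_simp
    nlinarith
  have hgz : ∀ l, 0 < p l → g l = 0 := by
    intro l hpl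
    refine le_antisymm ?_ (hg0 l)
    by_contra hpos
    push_neg at hpos
    set t : ℝ := min (p l) (g l / (2 * aRT)) with ht
    have htpos : 0 < t := lt_min hpl (div_pos hpos (by linarith))
    have hy : (0:ℝ) ≤ p l - t := by
      have := min_le_left (p l) (g l / (2 * aRT)); simp only [← ht] at this; linarith
    have := hkey l (p l - t) hy
    have hfac : aRT * (p l - t) + (aDA - aRT) * dl l - aRT * R = g l - aRT * t := by
      simp only [hgdef]; ring
    have hat : aRT * t ≤ g l / 2 := by
      have h1 : t ≤ g l / (2 * aRT) := min_le_right _ _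
      have := mul_le_mul_of_nonneg_left h1 haRT.le
      calc aRT * t ≤ aRT * (g l / (2 * aRT)) := this
        _ = g l / 2 := by field_simp
    nlinarith
  -- All players are strictly active
  have hall : ∀ l, 0 < p l := by
    by_contra hcon
    push_neg at hcon
    obtain ⟨l₀, hl₀⟩ := hcon
    have hp0 : p l₀ = 0 := le_antisymm hl₀ (hnn l₀)
    have hRneg : aRT * R < 0 := by
      have := hg0 l₀
      simp only [hgdef, hp0] at this
      nlinarith [hdl l₀]
    set A : Finset (Fin L) := Finset.univ.filter (fun l => 0 < p l) with hA
    have hSsum : S = ∑ l ∈ A, p l := by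
      rw [hS]
      refine (Finset.sum_subset (Finset.subset_univ A) ?_).symm
      intro x _ hx
      simp only [hA, Finset.mem_filter, Finset.mem_univ, true_and] at hx
      exact le_antisymm (not_lt.1 hx) (hnn x)
    have hAsum : aRT * S = (A.card : ℝ) * (aRT * R) + (aRT - aDA) * ∑ l ∈ A, dl l := by
      rw [hSsum, Finset.mul_sum]
      have : ∀ l ∈ A, aRT * p l = aRT * R + (aRT - aDA) * dl l := by
        intro l hl
        simp only [hA, Finset.mem_filter, Finset.mem_univ, true_and] at hl
        have := hgz l hl
        simp only [hgdef] at this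
        linarith
      rw [Finset.sum_congr rfl this, Finset.sum_add_distrib, Finset.sum_const,
        nsmul_eq_mul, ← Finset.mul_sum]
    have hdle : ∑ l ∈ A, dl l ≤ d := by
      rw [hd]
      exact Finset.sum_le_sum_of_subset_of_nonneg (Finset.subset_univ A)
        (fun i _ _ => (hdl i).le)
    have hmnn : (0:ℝ) ≤ (A.card : ℝ) := Nat.cast_nonneg _
    -- aRT*R = aRT*d - aRT*S ≥ aDA*d - m*aRT*R
    nlinarith [mul_le_mul_of_nonneg_left hdle (by linarith : (0:ℝ) ≤ aRT - aDA),
      mul_nonneg hmnn (le_of_lt (neg_pos.2 hRneg))]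
  -- Aggregate first-order condition
  have hsum : ∑ l, g l = 0 := Finset.sum_eq_zero fun l _ => hgz l (hall l)
  have hsum' : aRT * S + (aDA - aRT) * d - (L:ℝ) * (aRT * R) = 0 := by
    rw [← hsum]
    simp only [hgdef]
    rw [Finset.sum_sub_distrib, Finset.sum_add_distrib, Finset.sum_const,
      Finset.card_univ, Fintype.card_fin, nsmul_eq_mul, ← Finset.mul_sum, ← Finset.mul_sum,
      ← hS, hd]
  have hL1 : (0:ℝ) < (L:ℝ) + 1 := by positivity
  have hSeq : S = (1 - aDA / (((L : ℝ) + 1) * aRT)) * d := by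
    rw [hRS] at hsum'
    field_simp
    ring_nf
    ring_nf at hsum'
    nlinarith [hsum']
  have hReq : R = aDA / (((L : ℝ) + 1) * aRT) * d := by
    rw [hRS, hSeq]; ring
  -- coefficient bounds
  set c : ℝ := aDA / (((L : ℝ) + 1) * aRT) with hc
  have hc0 : 0 < c := div_pos h0 (by positivity)
  have hc1 : c < 1 / ((L:ℝ) + 1) := by
    rw [hc, div_lt_div_iff₀ (by positivity) hL1]
    nlinarith
  refine ⟨hSeq, hReq, ?_, ?_, ?_, ?_, ?_, ?_⟩
  · rw [hSeq]
    have e : (1 - c) * d = d - c * d := by ring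
    have := mul_pos hc0 hdpos
    linarith
  · rw [hSeq]
    have e : (1 - c) * d - (L:ℝ) / ((L:ℝ) + 1) * d = (1 / ((L:ℝ) + 1) - c) * d := by
      field_simp; ring
    have e2 : 0 < (1 / ((L:ℝ) + 1) - c) * d := mul_pos (by linarith) hdpos
    linarith
  · rw [hReq]
    exact mul_lt_mul_of_pos_right hc1 hdpos
  · rw [hReq]; positivity
  · have : 0 < aRT * R := by rw [hReq]; positivity
    rw [hlamRT]; linarith
  · have : 0 < aRT * R := by rw [hReq]; positivity
    rw [hlamRT]; linarith
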